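/- Let R be an SRS over Σ_A. The string rewrite relation →_{shift(R)} is terminating if and only if the cycle rewrite relation ∘→_R is terminating (i.e., the transformation shift is sound and complete). -/

import Mathlib

namespace CycleRewriting

/-- A binary relation is terminating if there is no infinite reduction sequence. -/
def Terminating {beta : Type*} (r : beta → beta → Prop) : Prop :=
  ¬ ∃ f : ℕ → beta, ∀ n : ℕ, r (f n) (f (n + 1))

/-- `r₁` is terminating relative to `r₂` iff every infinite `r₂`-sequence contains only
finitely many `r₁`-steps. -/
def RelTerminating {beta : Type*} (r₁ r₂ : beta → beta → Prop) : Prop :=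
  ¬ ∃ f : ℕ → beta, (∀ n : ℕ, r₂ (f n) (f (n + 1))) ∧
      {n : ℕ | r₁ (f n) (f (n + 1))}.Infinite

/-- The string rewrite relation of an SRS `R`. -/
def Step {α : Type*} (R : Set (List α × List α)) (x y : List α) : Prop :=
  ∃ u v l r, (l, r) ∈ R ∧ x = u ++ l ++ v ∧ y = u ++ r ++ v

/-- The prefix rewrite relation of an SRS `R`. -/
def PrefixStep {α : Type*} (R : Set (List α × List α)) (x y : List α) : Prop :=
  ∃ l r w, (l, r) ∈ R ∧ x = l ++ w ∧ y = r ++ w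

/-- The rotation equivalence `u ~ v` iff `u = w₁w₂` and `v = w₂w₁`. -/
def Sim {α : Type*} (u v : List α) : Prop :=
  ∃ w₁ w₂, u = w₁ ++ w₂ ∧ v = w₂ ++ w₁

/-- The cycle rewrite relation of an SRS `R` (on representatives of `Sim`-classes):
`[u] ∘→_R [v]` iff there are a rule `(l, r) ∈ R` and `w` with `l ++ w ∈ [u]` and
`r ++ w ∈ [v]`. -/
def CycleStep {α : Type*} (R : Set (List α × List α)) (x y : List α) : Prop :=
  ∃ l r w, (l, r) ∈ R ∧ Sim (l ++ w) x ∧ Sim (r ++ w) y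

/-- The shift relation `↷`: move the first symbol of a string to its end. -/
def Rot {α : Type*} (u v : List α) : Prop :=
  ∃ a w, u = a :: w ∧ v = w ++ [a]

/-- `k`-fold composition of a relation. -/
def RelPow {beta : Type*} (r : beta → beta → Prop) : ℕ → beta → beta → Prop
  | 0 => Eq
  | n + 1 => Relation.Comp r (RelPow r n)

/-- `lenSRS R` is the maximal length of a left-hand side of a rule of `R`. -/
noncomputable def lenSRS {α : Type*} (R : Set (List α × List α)) : ℕ :=
  sSup ((fun p : List α × List α => p.1.length) '' R)

/-- The alphabet of `shift R`: the original alphabet `Σ_A`, two fresh copies `Σ_B`,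
`Σ_C`, and the fresh symbols `B`, `E`, `W`, `V`, `M`, `L`, `R`, `D`. -/
inductive ShiftSym (α : Type*) where
  | ca : α → ShiftSym α          -- Σ_A
  | cb : α → ShiftSym α          -- Σ_B
  | cc : α → ShiftSym α          -- Σ_C
  | symB : ShiftSym α
  | symE : ShiftSym α
  | symW : ShiftSym α
  | symV : ShiftSym α
  | symM : ShiftSym α
  | symL : ShiftSym α
  | symR : ShiftSym α
  | symD : ShiftSym α

open ShiftSym in
/-- The transformation `shift`, with `N = max (0, lenSRS R - 1)`. -/
noncomputable def shiftSRS {α : Type*} (R : Set (List α × List α)) :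
    Set (List (ShiftSym α) × List (ShiftSym α)) :=
  { p | p = ([symB], symW :: List.replicate (lenSRS R - 1) symM ++ [symV]) ∨  -- shiftA
        p = ([symM], []) ∨                                                    -- shiftB
        (∃ a : α, p = ([symM, symV, ca a], [symV, cb a])) ∨                   -- shiftC
        (∃ a b : α, p = ([cb b, ca a], [ca a, cb b])) ∨                       -- shiftD
        (∃ b : α, p = ([cb b, symE], [ca b, symE])) ∨                         -- shiftE
        p = ([symW, symV], [symR, symL]) ∨                                    -- shiftF
        (∃ a : α, p = ([symL, ca a], [cc a, symL])) ∨                         -- shiftG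
        (∃ l r, (l, r) ∈ R ∧ p = (symL :: l.map ca, symD :: r.map ca)) ∨      -- shiftH
        (∃ c : α, p = ([cc c, symD], [symD, ca c])) ∨                         -- shiftI
        p = ([symR, symD], [symB]) }                                          -- shiftJ

section Generic

variable {β : Type*} {r : β → β → Prop}

lemma wf_no_descent (wf : WellFounded r) :
    ¬ ∃ f : ℕ → β, ∀ n, r (f (n + 1)) (f n) := by
  rintro ⟨f, hf⟩
  have key : ∀ x, Acc r x → ∀ n, f n ≠ x := by
    intro x hx
    induction hx with
    | intro y _ ih =>
      intro n hy
      exact ih (f (n + 1)) (hy ▸ hf n) (n + 1) rfl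
  exact key (f 0) (wf.apply (f 0)) 0 rfl

lemma terminating_of_wf (wf : WellFounded (flip r)) : Terminating r := by
  rintro ⟨f, hf⟩
  exact wf_no_descent wf ⟨f, fun n => hf n⟩

lemma wf_of_terminating (h : Terminating r) : WellFounded (flip r) := by
  by_contra hwf
  apply h
  have hne : ∃ x, ¬ Acc (flip r) x := by
    by_contra hx
    push_neg at hx
    exact hwf ⟨hx⟩
  obtain ⟨x0, hx0⟩ := hne
  have step : ∀ x, ¬ Acc (flip r) x → ∃ y, r x y ∧ ¬ Acc (flip r) y := by
    intro x hx
    by_contra hc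
    push_neg at hc
    exact hx (Acc.intro x (fun y hy => hc y hy))
  let g : ℕ → {x : β // ¬ Acc (flip r) x} := fun n =>
    Nat.rec ⟨x0, hx0⟩
      (fun _ p => ⟨(step p.1 p.2).choose, (step p.1 p.2).choose_spec.2⟩) n
  refine ⟨fun n => (g n).1, fun n => ?_⟩
  exact (step (g n).1 (g n).2).choose_spec.1

lemma terminating_transGen (h : Terminating r) :
    Terminating (Relation.TransGen r) := by
  apply terminating_of_wf
  have := (wf_of_terminating h).transGen
  have heq : ∀ x y : β, Relation.TransGen (flip r) x y ↔ flip (Relation.TransGen r) x y := by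
    intro x y
    constructor
    · intro hh
      exact Relation.TransGen.swap (r := flip r) y x hh
    · intro hh
      have := Relation.TransGen.swap (r := r) x y hh
      exact this
  have : WellFounded (fun x y => Relation.TransGen (flip r) x y) := this
  have h2 : (fun x y => flip (Relation.TransGen r) x y) = (fun x y => Relation.TransGen (flip r) x y) := by
    funext x y
    exact propext (heq x y).symm
  show WellFounded (fun x y => flip (Relation.TransGen r) x y)
  rw [h2]
  exact this

-- Sim lemmas
variable {γ : Type*}

@[simp] lemma sim_refl (u : List γ) : Sim u u := ⟨u, [], by simp, by simp⟩

lemma sim_append_comm (u v : List γ) : Sim (u ++ v) (v ++ u) := ⟨u, v, rfl, rfl⟩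

lemma sim_symm {u v : List γ} (h : Sim u v) : Sim v u := by
  obtain ⟨a, b, h1, h2⟩ := h
  exact ⟨b, a, h2, h1⟩

lemma sim_trans {u v w : List γ} (h1 : Sim u v) (h2 : Sim v w) : Sim u w := by
  obtain ⟨a, b, rfl, rfl⟩ := h1
  obtain ⟨c, d, hcd, rfl⟩ := h2
  rcases List.append_eq_append_iff.1 hcd with ⟨e, he1, he2⟩ | ⟨e, he1, he2⟩
  · subst he1 he2
    exact ⟨e, d ++ b, by simp, by simp⟩
  · subst he1 he2
    exact ⟨a ++ c, e, by simp, by simp⟩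

lemma cycleStep_sim_right {R : Set (List γ × List γ)} {x y y' : List γ}
    (h : CycleStep R x y) (hs : Sim y y') : CycleStep R x y' := by
  obtain ⟨l, r, w, hm, h1, h2⟩ := h
  exact ⟨l, r, w, hm, h1, sim_trans h2 hs⟩

lemma cycleStep_sim_left {R : Set (List γ × List γ)} {x x' y : List γ}
    (h : CycleStep R x y) (hs : Sim x x') : CycleStep R x' y := by
  obtain ⟨l, r, w, hm, h1, h2⟩ := h
  exact ⟨l, r, w, hm, sim_trans h1 hs, h2⟩

lemma cycleStep_of_context {R : Set (List γ × List γ)} {l r : List γ}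
    (hm : (l, r) ∈ R) (u v : List γ) :
    CycleStep R (u ++ l ++ v) (u ++ r ++ v) := by
  refine ⟨l, r, v ++ u, hm, ?_, ?_⟩
  · have : Sim (l ++ (v ++ u)) ((u ++ l) ++ v) := by
      have := sim_append_comm (l ++ v) u
      simpa using this
    simpa [List.append_assoc] using this
  · have := sim_append_comm (r ++ v) u
    simpa [List.append_assoc] using this

end Generic

section Sound
open ShiftSym Relation
variable {α : Type*} {R : Set (List α × List α)}

local notation "Sym" => ShiftSym α
local notation "SS" => Step (shiftSRS R)
local notation "RTG" => ReflTransGen (Step (shiftSRS R))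
local notation "TG" => TransGen (Step (shiftSRS R))

def A (p : List α) : List Sym := p.map ShiftSym.ca
def C (p : List α) : List Sym := p.map ShiftSym.cc
def enc (p : List α) : List Sym := symB :: A p ++ [symE]

@[simp] lemma A_nil : A ([] : List α) = [] := rfl
@[simp] lemma A_cons (a : α) (p : List α) : A (a :: p) = ShiftSym.ca a :: A p := rfl
@[simp] lemma A_append (p q : List α) : A (p ++ q) = A p ++ A q := List.map_append
@[simp] lemma C_nil : C ([] : List α) = [] := rfl
@[simp] lemma C_cons (a : α) (p : List α) : C (a :: p) = ShiftSym.cc a :: C p := rfl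
@[simp] lemma C_append (p q : List α) : C (p ++ q) = C p ++ C q := List.map_append

lemma mkStep {l r : List Sym} (hm : (l, r) ∈ shiftSRS R) (a b : List Sym) :
    SS (a ++ l ++ b) (a ++ r ++ b) := ⟨a, b, l, r, hm, rfl, rfl⟩

lemma step_ctx_left {x y : List Sym} (h : SS x y) (a : List Sym) :
    SS (a ++ x) (a ++ y) := by
  obtain ⟨u, v, l, r, hm, rfl, rfl⟩ := h
  refine ⟨a ++ u, v, l, r, hm, by simp, by simp⟩

lemma rtg_ctx_left {x y : List Sym} (h : RTG x y) (a : List Sym) :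
    RTG (a ++ x) (a ++ y) := by
  induction h with
  | refl => exact ReflTransGen.refl
  | tail _ hs ih => exact ih.tail (step_ctx_left hs a)

-- rule membership helpers
lemma ruleA_mem : (([symB], symW :: List.replicate (lenSRS R - 1) symM ++ [symV]) :
    List Sym × List Sym) ∈ shiftSRS R := Or.inl rfl
lemma ruleB_mem : (([symM], []) : List Sym × List Sym) ∈ shiftSRS R := Or.inr (Or.inl rfl)
lemma ruleC_mem (a : α) : (([symM, symV, ca a], [symV, cb a]) : List Sym × List Sym) ∈ shiftSRS R :=
  Or.inr (Or.inr (Or.inl ⟨a, rfl⟩))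
lemma ruleD_mem (a b : α) : (([cb b, ca a], [ca a, cb b]) : List Sym × List Sym) ∈ shiftSRS R :=
  Or.inr (Or.inr (Or.inr (Or.inl ⟨a, b, rfl⟩)))
lemma ruleE_mem (b : α) : (([cb b, symE], [ca b, symE]) : List Sym × List Sym) ∈ shiftSRS R :=
  Or.inr (Or.inr (Or.inr (Or.inr (Or.inl ⟨b, rfl⟩))))
lemma ruleF_mem : (([symW, symV], [symR, symL]) : List Sym × List Sym) ∈ shiftSRS R :=
  Or.inr (Or.inr (Or.inr (Or.inr (Or.inr (Or.inl rfl)))))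
lemma ruleG_mem (a : α) : (([symL, ca a], [cc a, symL]) : List Sym × List Sym) ∈ shiftSRS R :=
  Or.inr (Or.inr (Or.inr (Or.inr (Or.inr (Or.inr (Or.inl ⟨a, rfl⟩))))))
lemma ruleH_mem {l r : List α} (h : (l, r) ∈ R) :
    ((symL :: l.map ca, symD :: r.map ca) : List Sym × List Sym) ∈ shiftSRS R :=
  Or.inr (Or.inr (Or.inr (Or.inr (Or.inr (Or.inr (Or.inr (Or.inl ⟨l, r, h, rfl⟩)))))))
lemma ruleI_mem (c : α) : (([cc c, symD], [symD, ca c]) : List Sym × List Sym) ∈ shiftSRS R :=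
  Or.inr (Or.inr (Or.inr (Or.inr (Or.inr (Or.inr (Or.inr (Or.inr (Or.inl ⟨c, rfl⟩))))))))
lemma ruleJ_mem : (([symR, symD], [symB]) : List Sym × List Sym) ∈ shiftSRS R :=
  Or.inr (Or.inr (Or.inr (Or.inr (Or.inr (Or.inr (Or.inr (Or.inr (Or.inr rfl))))))))

lemma delM : ∀ (j : ℕ) (t : List Sym), RTG (List.replicate j symM ++ t) t := by
  intro j
  induction j with
  | zero => intro t; simp; exact Relation.ReflTransGen.refl
  | succ n ih =>
    intro t
    have h1 : SS (List.replicate (n+1) symM ++ t) (List.replicate n symM ++ t) := by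
      have := mkStep (R := R) ruleB_mem [] (List.replicate n symM ++ t)
      simpa [List.replicate_succ] using this
    exact ReflTransGen.head h1 (ih t)

lemma bub : ∀ (s : List α) (a : α) (t : List Sym),
    RTG (cb a :: A s ++ symE :: t) (A s ++ ca a :: symE :: t) := by
  intro s
  induction s with
  | nil =>
    intro a t
    refine ReflTransGen.single ?_
    have := mkStep (R := R) (ruleE_mem a) [] t
    simpa using this
  | cons x s ih =>
    intro a t
    have h1 : SS (cb a :: A (x :: s) ++ symE :: t) (ca x :: cb a :: A s ++ symE :: t) := by
      have := mkStep (R := R) (ruleD_mem x a) [] (A s ++ symE :: t)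
      simpa using this
    refine ReflTransGen.head h1 ?_
    have := rtg_ctx_left (ih a t) [ca x]
    simpa using this

lemma c1 (a : α) (s : List α) (t : List Sym) :
    RTG (symM :: symV :: ca a :: A s ++ symE :: t) (symV :: A (s ++ [a]) ++ symE :: t) := by
  have h1 : SS (symM :: symV :: ca a :: A s ++ symE :: t) (symV :: cb a :: A s ++ symE :: t) := by
    have := mkStep (R := R) (ruleC_mem a) [] (A s ++ symE :: t)
    simpa using this
  refine ReflTransGen.head h1 ?_
  have := rtg_ctx_left (bub (R := R) s a t) [symV]
  simpa [A_append] using this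

lemma rot : ∀ (p s : List α) (t : List Sym),
    RTG (symW :: List.replicate p.length symM ++ symV :: A (p ++ s) ++ symE :: t)
        (symW :: symV :: A (s ++ p) ++ symE :: t) := by
  intro p
  induction p with
  | nil => intro s t; simp; exact Relation.ReflTransGen.refl
  | cons a p ih =>
    intro s t
    have h1 : RTG (symW :: List.replicate (a :: p).length symM ++ symV :: A ((a :: p) ++ s) ++ symE :: t)
        (symW :: List.replicate p.length symM ++ symV :: A ((p ++ (s ++ [a]))) ++ symE :: t) := by
      have := rtg_ctx_left (c1 (R := R) a (p ++ s) t) (symW :: List.replicate p.length symM)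
      simpa [List.replicate_succ', List.append_assoc] using this
    refine h1.trans ?_
    have := ih (s ++ [a]) t
    simpa [List.append_assoc] using this

lemma gwalk : ∀ (u z : List α) (t : List Sym),
    RTG (symL :: A (u ++ z) ++ t) (C u ++ symL :: A z ++ t) := by
  intro u
  induction u with
  | nil => intro z t; simp; exact Relation.ReflTransGen.refl
  | cons a u ih =>
    intro z t
    have h1 : SS (symL :: A ((a :: u) ++ z) ++ t) (cc a :: symL :: A (u ++ z) ++ t) := by
      have := mkStep (R := R) (ruleG_mem a) [] (A (u ++ z) ++ t)
      simpa using this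
    refine ReflTransGen.head h1 ?_
    have := rtg_ctx_left (ih z t) [cc a]
    simpa using this

lemma iwalk : ∀ (u : List α) (t : List Sym),
    RTG (C u ++ symD :: t) (symD :: A u ++ t) := by
  intro u
  induction u with
  | nil => intro t; simp; exact Relation.ReflTransGen.refl
  | cons c u ih =>
    intro t
    have h1 : RTG (C (c :: u) ++ symD :: t) (cc c :: symD :: A u ++ t) := by
      have := rtg_ctx_left (ih t) [cc c]
      simpa using this
    refine h1.trans ?_
    refine ReflTransGen.single ?_
    have := mkStep (R := R) (ruleI_mem c) [] (A u ++ t)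
    simpa using this

lemma core {p y u l r v : List α} (hm : (l, r) ∈ R)
    (hp : p.length ≤ lenSRS R - 1) (hy : y ++ p = u ++ l ++ v) :
    TG (enc (p ++ y)) (enc (u ++ r ++ v)) := by
  set N := lenSRS R - 1 with hN
  -- step A
  have sA : SS (enc (p ++ y)) (symW :: List.replicate N symM ++ symV :: A (p ++ y) ++ [symE]) := by
    have := mkStep (R := R) ruleA_mem [] (A (p ++ y) ++ [symE])
    simpa [enc, List.append_assoc] using this
  -- delete superfluous M's
  have h2 : RTG (symW :: List.replicate N symM ++ symV :: A (p ++ y) ++ [symE])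
      (symW :: List.replicate p.length symM ++ symV :: A (p ++ y) ++ [symE]) := by
    have key : ∀ (j : ℕ) (t : List Sym),
        RTG (symW :: (List.replicate (j + p.length) symM ++ t))
            (symW :: (List.replicate p.length symM ++ t)) := by
      intro j
      induction j with
      | zero => intro t; rw [Nat.zero_add]
      | succ n ih =>
        intro t
        have hs : SS (symW :: (List.replicate (n + p.length + 1) symM ++ t))
            (symW :: (List.replicate (n + p.length) symM ++ t)) := by
          have := mkStep (R := R) ruleB_mem [symW] (List.replicate (n + p.length) symM ++ t)
          simpa [List.replicate_succ] using this
        have : (n + 1) + p.length = n + p.length + 1 := by omega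
        rw [this]
        exact Relation.ReflTransGen.head hs (ih t)
    have e : N - p.length + p.length = N := by omega
    have := key (N - p.length) (symV :: A (p ++ y) ++ [symE])
    rw [e] at this
    simpa [List.append_assoc] using this
  -- rotate
  have h3 : RTG (symW :: List.replicate p.length symM ++ symV :: A (p ++ y) ++ [symE])
      (symW :: symV :: A (y ++ p) ++ [symE]) := by
    have := rot (R := R) p y []
    simpa using this
  -- step F
  have sF : SS (symW :: symV :: A (y ++ p) ++ [symE]) (symR :: symL :: A (y ++ p) ++ [symE]) := by
    have := mkStep (R := R) ruleF_mem [] (A (y ++ p) ++ [symE])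
    simpa using this
  -- walk L
  have h5 : RTG (symR :: symL :: A (y ++ p) ++ [symE])
      (symR :: (C u ++ symL :: A (l ++ v) ++ [symE])) := by
    rw [hy]
    have := rtg_ctx_left (gwalk (R := R) u (l ++ v) [symE]) [symR]
    simpa [List.append_assoc] using this
  -- step H
  have sH : SS (symR :: (C u ++ symL :: A (l ++ v) ++ [symE]))
      (symR :: (C u ++ symD :: A (r ++ v) ++ [symE])) := by
    have := mkStep (R := R) (ruleH_mem hm) (symR :: C u) (A v ++ [symE])
    simpa [A, List.append_assoc] using this
  -- walk D back
  have h7 : RTG (symR :: (C u ++ symD :: A (r ++ v) ++ [symE]))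
      (symR :: symD :: A u ++ A (r ++ v) ++ [symE]) := by
    have := rtg_ctx_left (iwalk (R := R) u (A (r ++ v) ++ [symE])) [symR]
    simpa [List.append_assoc] using this
  -- step J
  have sJ : SS (symR :: symD :: A u ++ A (r ++ v) ++ [symE]) (enc (u ++ r ++ v)) := by
    have := mkStep (R := R) ruleJ_mem [] (A u ++ A (r ++ v) ++ [symE])
    simpa [enc, List.append_assoc] using this
  have : RTG (symW :: List.replicate N symM ++ symV :: A (p ++ y) ++ [symE]) (enc (u ++ r ++ v)) :=
    ((((h2.trans h3).tail sF).trans h5).tail sH).trans (h7.tail sJ)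
  exact TransGen.head' sA this

lemma sim_symm' {γ : Type*} {u v : List γ} (h : Sim u v) : Sim v u := by
  obtain ⟨a, b, h1, h2⟩ := h; exact ⟨b, a, h2, h1⟩

lemma sim_trans' {γ : Type*} {u v w : List γ} (h1 : Sim u v) (h2 : Sim v w) : Sim u w := by
  obtain ⟨a, b, rfl, rfl⟩ := h1
  obtain ⟨c, d, hcd, rfl⟩ := h2
  rcases List.append_eq_append_iff.1 hcd with ⟨e, he1, he2⟩ | ⟨e, he1, he2⟩
  · subst he1 he2
    exact ⟨e, d ++ b, by simp, by simp⟩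
  · subst he1 he2
    exact ⟨a ++ c, e, by simp, by simp⟩

lemma lhs_len_le (hfin : R.Finite) {l r : List α} (hm : (l, r) ∈ R) :
    l.length ≤ lenSRS R := by
  apply le_csSup ((hfin.image _).bddAbove)
  exact ⟨(l, r), hm, rfl⟩

lemma simStep (hfin : R.Finite) {l r w x : List α} (hm : (l, r) ∈ R)
    (hx : Sim (l ++ w) x) :
    ∃ x', TG (enc x) (enc x') ∧ Sim x' (r ++ w) := by
  obtain ⟨w₁, w₂, h1, rfl⟩ := hx
  rcases List.append_eq_append_iff.1 h1 with ⟨z, hz1, hz2⟩ | ⟨l₂, hl2, hw2⟩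
  · -- w₁ = l ++ z, w = z ++ w₂
    subst hz1 hz2
    refine ⟨w₂ ++ r ++ z, ?_, ?_⟩
    · have := core (p := []) (y := w₂ ++ (l ++ z)) (u := w₂) (v := z) hm
        (by simp) (by simp [List.append_assoc])
      simpa [List.append_assoc] using this
    · have := sim_append_comm (w₂ : List α) (r ++ z)
      simpa [List.append_assoc] using this
  · -- l = w₁ ++ l₂, w₂ = l₂ ++ w
    subst hl2 hw2
    rcases List.eq_nil_or_concat w₁ with rfl | ⟨_, _, hne⟩
    · -- w₁ = []
      refine ⟨r ++ w, ?_, ⟨r ++ w, [], by simp, by simp⟩⟩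
      have := core (p := []) (y := (l₂ ++ w) ++ []) (u := []) (v := w) hm
        (by simp) (by simp)
      simpa using this
    · have hw1 : 1 ≤ w₁.length := by
        subst hne; simp
      have hlen : l₂.length ≤ lenSRS R - 1 := by
        have := lhs_len_le (R := R) hfin hm
        simp at this
        omega
      refine ⟨w ++ r ++ [], ?_, by simpa using sim_append_comm (w : List α) r⟩
      have := core (p := l₂) (y := w ++ w₁) (u := w) (v := []) hm hlen
        (by simp [List.append_assoc])
      have h2 : l₂ ++ (w ++ w₁) = l₂ ++ w ++ w₁ := by simp [List.append_assoc]
      rw [h2] at this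
      exact this

lemma sim_refl' (u : List α) : Sim u u := ⟨u, [], by simp, by simp⟩

end Sound


section SoundDir
open ShiftSym Relation
variable {α : Type*} {R : Set (List α × List α)}

lemma sound_dir (hfin : R.Finite) (hs : Terminating (Step (shiftSRS R))) :
    Terminating (CycleStep R) := by
  rintro ⟨f, hf⟩
  have hstep : ∀ (n : ℕ) (p : List α), Sim p (f n) →
      ∃ q, TransGen (Step (shiftSRS R)) (enc p) (enc q) ∧ Sim q (f (n + 1)) := by
    intro n p hp
    obtain ⟨l, r, w, hm, h1, h2⟩ := hf n
    obtain ⟨x', htg, hs'⟩ := simStep hfin hm (sim_trans' h1 (sim_symm' hp))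
    exact ⟨x', htg, sim_trans' hs' h2⟩
  let g : (n : ℕ) → {p : List α // Sim p (f n)} := fun n =>
    Nat.rec ⟨f 0, sim_refl' _⟩
      (fun n pr => ⟨(hstep n pr.1 pr.2).choose, ((hstep n pr.1 pr.2).choose_spec).2⟩) n
  exact terminating_transGen hs
    ⟨fun n => enc (g n).1, fun n => ((hstep n (g n).1 (g n).2).choose_spec).1⟩

end SoundDir


section Mu
open ShiftSym
variable {α : Type*} {R : Set (List α × List α)}
local notation "Sym" => ShiftSym α

def pD : Sym → Bool := fun y => match y with | symD => true | _ => false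
def pB : Sym → Bool := fun y => match y with | symB => true | _ => false
def pM : Sym → Bool := fun y => match y with | symM => true | _ => false
def pW : Sym → Bool := fun y => match y with | symW => true | _ => false
def pCB : Sym → Bool := fun y => match y with | cb _ => true | _ => false
def pCC : Sym → Bool := fun y => match y with | cc _ => true | _ => false
def pCA : Sym → Bool := fun y => match y with | ca _ => true | _ => false
def pAC : Sym → Bool := fun y => match y with | ca _ => true | cc _ => true | _ => false
def pL : Sym → Bool := fun y => match y with | symL => true | _ => false

def mu6 : List Sym → ℕ
  | [] => 0
  | y :: t => (if pL y then t.countP pAC else 0) + mu6 t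
def mu7 : List Sym → ℕ
  | [] => 0
  | y :: t => (if pCC y then t.countP pD else 0) + mu7 t
def mu8 : List Sym → ℕ
  | [] => 0
  | y :: t => (if pCB y then t.countP pCA else 0) + mu8 t

lemma mu6_append (x y : List Sym) :
    mu6 (x ++ y) = mu6 x + x.countP pL * y.countP pAC + mu6 y := by
  induction x with
  | nil => simp [mu6]
  | cons a x ih =>
    simp only [List.cons_append, mu6, ih, List.countP_cons, List.countP_append]
    by_cases h : pL a
    · simp [h, ih]; ring
    · simp [h, ih]
lemma mu7_append (x y : List Sym) :
    mu7 (x ++ y) = mu7 x + x.countP pCC * y.countP pD + mu7 y := by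
  induction x with
  | nil => simp [mu7]
  | cons a x ih =>
    simp only [List.cons_append, mu7, ih, List.countP_cons, List.countP_append]
    by_cases h : pCC a
    · simp [h, ih]; ring
    · simp [h, ih]
lemma mu8_append (x y : List Sym) :
    mu8 (x ++ y) = mu8 x + x.countP pCB * y.countP pCA + mu8 y := by
  induction x with
  | nil => simp [mu8]
  | cons a x ih =>
    simp only [List.cons_append, mu8, ih, List.countP_cons, List.countP_append]
    by_cases h : pCB a
    · simp [h, ih]; ring
    · simp [h, ih]

abbrev T8 := ℕ × ℕ × ℕ × ℕ × ℕ × ℕ × ℕ × ℕ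

def lt2 : ℕ × ℕ → ℕ × ℕ → Prop := Prod.Lex (· < ·) (· < ·)
def lt3 : ℕ × ℕ × ℕ → ℕ × ℕ × ℕ → Prop := Prod.Lex (· < ·) lt2
def lt4 : ℕ × ℕ × ℕ × ℕ → ℕ × ℕ × ℕ × ℕ → Prop := Prod.Lex (· < ·) lt3
def lt5 : ℕ × ℕ × ℕ × ℕ × ℕ → ℕ × ℕ × ℕ × ℕ × ℕ → Prop := Prod.Lex (· < ·) lt4
def lt6 : ℕ × ℕ × ℕ × ℕ × ℕ × ℕ → ℕ × ℕ × ℕ × ℕ × ℕ × ℕ → Prop := Prod.Lex (· < ·) lt5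
def lt7 : ℕ × ℕ × ℕ × ℕ × ℕ × ℕ × ℕ → ℕ × ℕ × ℕ × ℕ × ℕ × ℕ × ℕ → Prop := Prod.Lex (· < ·) lt6
def lt8 : T8 → T8 → Prop := Prod.Lex (· < ·) lt7

lemma lt8_wf : WellFounded lt8 := by
  have h0 : WellFounded ((· < ·) : ℕ → ℕ → Prop) := Nat.lt_wfRel.wf
  exact h0.prod_lex (h0.prod_lex (h0.prod_lex (h0.prod_lex (h0.prod_lex (h0.prod_lex
    (h0.prod_lex h0))))))

lemma mu6_replicate (n : ℕ) : mu6 (List.replicate n (symM : Sym)) = 0 := by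
  induction n with
  | zero => rfl
  | succ k ih => simp [List.replicate_succ, mu6, ih, pL]
lemma mu7_replicate (n : ℕ) : mu7 (List.replicate n (symM : Sym)) = 0 := by
  induction n with
  | zero => rfl
  | succ k ih => simp [List.replicate_succ, mu7, ih, pCC]
lemma mu8_replicate (n : ℕ) : mu8 (List.replicate n (symM : Sym)) = 0 := by
  induction n with
  | zero => rfl
  | succ k ih => simp [List.replicate_succ, mu8, ih, pCB]

def mu (x : List Sym) : T8 :=
  (x.countP pD, x.countP pB, x.countP pM, x.countP pW, x.countP pCB, mu6 x, mu7 x, mu8 x)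

lemma lt8_of {a1 b1 c1 d1 e1 f1 g1 h1 a2 b2 c2 d2 e2 f2 g2 h2 : ℕ}
    (h : a1 < a2 ∨ (a1 = a2 ∧ (b1 < b2 ∨ (b1 = b2 ∧ (c1 < c2 ∨ (c1 = c2 ∧
      (d1 < d2 ∨ (d1 = d2 ∧ (e1 < e2 ∨ (e1 = e2 ∧ (f1 < f2 ∨ (f1 = f2 ∧
      (g1 < g2 ∨ (g1 = g2 ∧ h1 < h2)))))))))))))) :
    lt8 (a1, b1, c1, d1, e1, f1, g1, h1) (a2, b2, c2, d2, e2, f2, g2, h2) := by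
  rcases h with h | ⟨rfl, h⟩
  · exact Prod.Lex.left _ _ h
  refine Prod.Lex.right _ ?_
  rcases h with h | ⟨rfl, h⟩
  · exact Prod.Lex.left _ _ h
  refine Prod.Lex.right _ ?_
  rcases h with h | ⟨rfl, h⟩
  · exact Prod.Lex.left _ _ h
  refine Prod.Lex.right _ ?_
  rcases h with h | ⟨rfl, h⟩
  · exact Prod.Lex.left _ _ h
  refine Prod.Lex.right _ ?_
  rcases h with h | ⟨rfl, h⟩
  · exact Prod.Lex.left _ _ h
  refine Prod.Lex.right _ ?_
  rcases h with h | ⟨rfl, h⟩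
  · exact Prod.Lex.left _ _ h
  refine Prod.Lex.right _ ?_
  rcases h with h | ⟨rfl, h⟩
  · exact Prod.Lex.left _ _ h
  exact Prod.Lex.right _ h

-- the big per-rule decrease lemma
lemma mu_dec_nonH {x y : List Sym} {l r : List Sym} (u v : List Sym)
    (hx : x = u ++ l ++ v) (hy : y = u ++ r ++ v)
    (hrule : (l, r) ∈ shiftSRS R ∧ ¬ ∃ l' r', (l', r') ∈ R ∧
      (l, r) = (symL :: l'.map ca, symD :: r'.map ca)) :
    lt8 (mu y) (mu x) := by
  obtain ⟨hr, hnot⟩ := hrule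
  subst hx hy
  rcases hr with h | h | ⟨a, h⟩ | ⟨a, b, h⟩ | ⟨b, h⟩ | h | ⟨a, h⟩ | ⟨l', r', hm, h⟩ | ⟨c, h⟩ | h
  all_goals try (rw [Prod.mk.injEq] at h; obtain ⟨rfl, rfl⟩ := h)
  · -- A : B → W M^N V
    simp only [mu]
    refine lt8_of ?_
    simp [List.countP_append, mu6_append, mu7_append, mu8_append, List.countP_cons,
      List.countP_nil, mu6, mu7, mu8, pD, pB, pM, pW, pCB, pAC, pCC, pCA, pL,
      List.countP_replicate, mu6_replicate, mu7_replicate, mu8_replicate]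
    try omega
  · -- B : M → ε
    simp only [mu]
    refine lt8_of ?_
    simp [List.countP_append, mu6_append, mu7_append, mu8_append, List.countP_cons,
      List.countP_nil, mu6, mu7, mu8, pD, pB, pM, pW, pCB, pAC, pCC, pCA, pL,
      List.countP_replicate, mu6_replicate, mu7_replicate, mu8_replicate]
    try omega
  · -- C
    simp only [mu]
    refine lt8_of ?_
    simp [List.countP_append, mu6_append, mu7_append, mu8_append, List.countP_cons,
      List.countP_nil, mu6, mu7, mu8, pD, pB, pM, pW, pCB, pAC, pCC, pCA, pL,
      List.countP_replicate, mu6_replicate, mu7_replicate, mu8_replicate]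
    try omega
  · -- D
    simp only [mu]
    refine lt8_of ?_
    simp [List.countP_append, mu6_append, mu7_append, mu8_append, List.countP_cons,
      List.countP_nil, mu6, mu7, mu8, pD, pB, pM, pW, pCB, pAC, pCC, pCA, pL,
      List.countP_replicate, mu6_replicate, mu7_replicate, mu8_replicate]
    try omega
  · -- E
    simp only [mu]
    refine lt8_of ?_
    simp [List.countP_append, mu6_append, mu7_append, mu8_append, List.countP_cons,
      List.countP_nil, mu6, mu7, mu8, pD, pB, pM, pW, pCB, pAC, pCC, pCA, pL,
      List.countP_replicate, mu6_replicate, mu7_replicate, mu8_replicate]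
    try omega
  · -- F
    simp only [mu]
    refine lt8_of ?_
    simp [List.countP_append, mu6_append, mu7_append, mu8_append, List.countP_cons,
      List.countP_nil, mu6, mu7, mu8, pD, pB, pM, pW, pCB, pAC, pCC, pCA, pL,
      List.countP_replicate, mu6_replicate, mu7_replicate, mu8_replicate]
    try omega
  · -- G
    simp only [mu]
    refine lt8_of ?_
    simp [List.countP_append, mu6_append, mu7_append, mu8_append, List.countP_cons,
      List.countP_nil, mu6, mu7, mu8, pD, pB, pM, pW, pCB, pAC, pCC, pCA, pL,
      List.countP_replicate, mu6_replicate, mu7_replicate, mu8_replicate]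
    try omega
  · -- H : excluded
    exact (hnot ⟨l', r', hm, rfl⟩).elim
  · -- I
    simp only [mu]
    refine lt8_of ?_
    simp [List.countP_append, mu6_append, mu7_append, mu8_append, List.countP_cons,
      List.countP_nil, mu6, mu7, mu8, pD, pB, pM, pW, pCB, pAC, pCC, pCA, pL,
      List.countP_replicate, mu6_replicate, mu7_replicate, mu8_replicate]
    try omega
  · -- J
    simp only [mu]
    refine lt8_of ?_
    simp [List.countP_append, mu6_append, mu7_append, mu8_append, List.countP_cons,
      List.countP_nil, mu6, mu7, mu8, pD, pB, pM, pW, pCB, pAC, pCC, pCA, pL,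
      List.countP_replicate, mu6_replicate, mu7_replicate, mu8_replicate]
    try omega

end Mu

section Machine
open ShiftSym
variable {α : Type*} {R : Set (List α × List α)}
local notation "Sym" => ShiftSym α

-- basic Sim lemmas (restated here for scratch; merged later)
lemma sim_refl0 {γ : Type*} (u : List γ) : Sim u u := ⟨u, [], by simp, by simp⟩
lemma sim_comm0 {γ : Type*} (u v : List γ) : Sim (u ++ v) (v ++ u) := ⟨u, v, rfl, rfl⟩
lemma sim_symm0 {γ : Type*} {u v : List γ} (h : Sim u v) : Sim v u := by
  obtain ⟨a, b, h1, h2⟩ := h; exact ⟨b, a, h2, h1⟩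
lemma sim_trans0 {γ : Type*} {u v w : List γ} (h1 : Sim u v) (h2 : Sim v w) : Sim u w := by
  obtain ⟨a, b, rfl, rfl⟩ := h1
  obtain ⟨c, d, hcd, rfl⟩ := h2
  rcases List.append_eq_append_iff.1 hcd with ⟨e, he1, he2⟩ | ⟨e, he1, he2⟩
  · subst he1 he2; exact ⟨e, d ++ b, by simp, by simp⟩
  · subst he1 he2; exact ⟨a ++ c, e, by simp, by simp⟩

inductive S5 | s | m | r | t | u deriving DecidableEq

def ins : Sym → S5
  | symB => .s | symW => .s | symR => .s
  | symM => .m | symV => .m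
  | symL => .r | symD => .r | cc _ => .r
  | ca _ => .t | cb _ => .t | symE => .t
def outs : Sym → S5
  | symB => .t | symW => .m | symM => .m | symV => .t
  | symR => .r | symL => .t | symD => .t
  | cc _ => .r | ca _ => .t | cb _ => .t | symE => .u

lemma ins_ne_u (y : Sym) : ins y ≠ S5.u := by cases y <;> simp [ins]

@[ext] structure St (α : Type*) where
  done : List (List α)
  cas : List α
  cbs : List α
  srt : Option S5

def seg (s : St α) : List α := s.cas ++ s.cbs.reverse
def kap (s : St α) : List α := s.cbs.reverse ++ s.cas

lemma sim_seg_kap (s : St α) : Sim (seg s) (kap s) := sim_comm0 _ _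
lemma sim_kap_seg (s : St α) : Sim (kap s) (seg s) := sim_comm0 _ _

def bnd (σ : Option S5) (y : Sym) : Bool :=
  match σ with
  | none => false
  | some τ => decide (τ ≠ ins y)

def letA : Sym → Option α
  | ca a => some a | cc a => some a | _ => none
def letB : Sym → Option α
  | cb a => some a | _ => none

def procSym (s : St α) (y : Sym) : St α :=
  { done := if bnd s.srt y then s.done ++ [seg s] else s.done
    cas := (if bnd s.srt y then [] else s.cas) ++ (letA y).toList
    cbs := (if bnd s.srt y then [] else s.cbs) ++ (letB y).toList
    srt := some (outs y) }

def proc (s : St α) (x : List Sym) : St α := x.foldl procSym s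

@[simp] lemma proc_nil (s : St α) : proc s [] = s := rfl
@[simp] lemma proc_cons (s : St α) (y : Sym) (x : List Sym) :
    proc s (y :: x) = proc (procSym s y) x := rfl
@[simp] lemma proc_append (s : St α) (x y : List Sym) :
    proc s (x ++ y) = proc (proc s x) y := List.foldl_append ..

def initSt : St α := ⟨[], [], [], none⟩
def fin (s : St α) : List (List α) := s.done ++ [seg s]
def Phi (x : List Sym) : List (List α) := fin (proc initSt x)

def Inv (s : St α) : Prop :=
  (s.srt = none → s.done = [] ∧ s.cas = [] ∧ s.cbs = []) ∧
  ((s.srt = some .s ∨ s.srt = some .m) → s.cas = [] ∧ s.cbs = []) ∧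
  (s.srt = some .r → s.cbs = [])

lemma noBnd_cases {s : St α} {y : Sym} (hb : bnd s.srt y = false) :
    s.srt = none ∨ s.srt = some (ins y) := by
  rcases hσ : s.srt with _ | τ
  · exact Or.inl rfl
  · right
    rw [hσ] at hb
    simp [bnd] at hb
    rw [hb]

lemma inv_procSym {s : St α} (h : Inv s) (y : Sym) : Inv (procSym s y) := by
  obtain ⟨h0, h1, h2⟩ := h
  cases y with
  | symW =>
    refine ⟨by simp [procSym], fun _ => ?_, by simp [procSym, outs]⟩
    by_cases hb : bnd s.srt (symW : Sym)
    · simp [procSym, hb, letA, letB]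
    · rcases noBnd_cases (by simpa using hb) with hσ | hσ
      · have := h0 hσ; simp [procSym, hb, letA, letB, this.2.1, this.2.2]
      · have := h1 (Or.inl hσ); simp [procSym, hb, letA, letB, this.1, this.2]
  | symM =>
    refine ⟨by simp [procSym], fun _ => ?_, by simp [procSym, outs]⟩
    by_cases hb : bnd s.srt (symM : Sym)
    · simp [procSym, hb, letA, letB]
    · rcases noBnd_cases (by simpa using hb) with hσ | hσ
      · have := h0 hσ; simp [procSym, hb, letA, letB, this.2.1, this.2.2]
      · have := h1 (Or.inr hσ); simp [procSym, hb, letA, letB, this.1, this.2]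
  | symR =>
    refine ⟨by simp [procSym], by simp [procSym, outs], fun _ => ?_⟩
    by_cases hb : bnd s.srt (symR : Sym)
    · simp [procSym, hb, letB]
    · rcases noBnd_cases (by simpa using hb) with hσ | hσ
      · have := h0 hσ; simp [procSym, hb, letB, this.2.2]
      · have := h1 (Or.inl hσ); simp [procSym, hb, letB, this.2]
  | cc a =>
    refine ⟨by simp [procSym], by simp [procSym, outs], fun _ => ?_⟩
    by_cases hb : bnd s.srt (cc a)
    · simp [procSym, hb, letB]
    · rcases noBnd_cases (by simpa using hb) with hσ | hσ
      · have := h0 hσ; simp [procSym, hb, letB, this.2.2]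
      · have := h2 hσ; simp [procSym, hb, letB, this]
  | ca a => exact ⟨by simp [procSym], by simp [procSym, outs], by simp [procSym, outs]⟩
  | cb a => exact ⟨by simp [procSym], by simp [procSym, outs], by simp [procSym, outs]⟩
  | symB => exact ⟨by simp [procSym], by simp [procSym, outs], by simp [procSym, outs]⟩
  | symE => exact ⟨by simp [procSym], by simp [procSym, outs], by simp [procSym, outs]⟩
  | symV => exact ⟨by simp [procSym], by simp [procSym, outs], by simp [procSym, outs]⟩
  | symL => exact ⟨by simp [procSym], by simp [procSym, outs], by simp [procSym, outs]⟩
  | symD => exact ⟨by simp [procSym], by simp [procSym, outs], by simp [procSym, outs]⟩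

lemma inv_proc : ∀ (x : List Sym) (s : St α), Inv s → Inv (proc s x) := by
  intro x
  induction x with
  | nil => intro s h; exact h
  | cons y t ih => intro s h; exact ih _ (inv_procSym h y)

lemma inv_init : Inv (initSt : St α) :=
  ⟨fun _ => ⟨rfl, rfl, rfl⟩, fun h => by simp [initSt] at h ⊢, fun h => by simp [initSt] at h ⊢⟩

-- relations
def SC (R : Set (List α × List α)) : List α → List α → Prop :=
  fun a b => Sim a b ∨ CycleStep R a b

def REl (s₁ s₂ : St α) : Prop :=
  s₁.srt = s₂.srt ∧ List.Forall₂ Sim s₁.done s₂.done ∧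
    (kap s₁ = kap s₂ ∨ (s₁.srt = some .u ∧ Sim (kap s₁) (kap s₂)))
def RM (s₁ s₂ : St α) : Prop :=
  ∃ τ, s₂.srt = some τ ∧ τ ≠ .m ∧ s₁ = ⟨s₂.done ++ [seg s₂], [], [], some .m⟩
def RM0 (s₁ s₂ : St α) : Prop :=
  s₁ = ⟨[], [], [], some .m⟩ ∧ s₂ = ⟨[], [], [], none⟩
def RLen (s₁ s₂ : St α) : Prop := s₁.srt = s₂.srt ∧ s₂.done.length < s₁.done.length
def RALL (s₁ s₂ : St α) : Prop := REl s₁ s₂ ∨ RM s₁ s₂ ∨ RM0 s₁ s₂ ∨ RLen s₁ s₂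

def HK (R : Set (List α × List α)) (k₁ k₂ : List α) : Prop :=
  ∃ l r pre post, (l, r) ∈ R ∧ k₁ = pre ++ l ++ post ∧ k₂ = pre ++ r ++ post
def RH1 (R : Set (List α × List α)) (s₁ s₂ : St α) : Prop :=
  s₁.srt = s₂.srt ∧ List.Forall₂ Sim s₁.done s₂.done ∧ HK R (kap s₁) (kap s₂)
def RH2 (R : Set (List α × List α)) (s₁ s₂ : St α) : Prop :=
  s₁.srt = s₂.srt ∧
  (∃ d₁ c₁ e₁ d₂ c₂ e₂, s₁.done = d₁ ++ c₁ :: e₁ ∧ s₂.done = d₂ ++ c₂ :: e₂ ∧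
    List.Forall₂ Sim d₁ d₂ ∧ List.Forall₂ Sim e₁ e₂ ∧ CycleStep R c₁ c₂) ∧
  (kap s₁ = kap s₂ ∨ (s₁.srt = some .u ∧ Sim (kap s₁) (kap s₂)))
def RH (R : Set (List α × List α)) (s₁ s₂ : St α) : Prop := RH1 R s₁ s₂ ∨ RH2 R s₁ s₂

lemma forall₂_app {γ : Type*} {P : γ → γ → Prop} {a b c d : List γ}
    (h1 : List.Forall₂ P a b) (h2 : List.Forall₂ P c d) : List.Forall₂ P (a ++ c) (b ++ d) := by
  induction h1 with
  | nil => exact h2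
  | cons hx _ ih => exact List.Forall₂.cons hx ih

lemma forall₂_sim_refl (d : List (List α)) : List.Forall₂ Sim d d :=
  List.forall₂_same.2 (fun x _ => sim_refl0 x)

lemma REl_of_eq {s₁ s₂ : St α} (h : s₁ = s₂) : REl s₁ s₂ :=
  h ▸ ⟨rfl, forall₂_sim_refl _, Or.inl rfl⟩

lemma cycleStep_of_HK {k₁ k₂ : List α} (h : HK R k₁ k₂) : CycleStep R k₁ k₂ := by
  obtain ⟨l, r, pre, post, hm, rfl, rfl⟩ := h
  refine ⟨l, r, post ++ pre, hm, ?_, ?_⟩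
  · have := sim_comm0 (l ++ post) pre
    simpa [List.append_assoc] using this
  · have := sim_comm0 (r ++ post) pre
    simpa [List.append_assoc] using this

lemma cycleStep_simLR {a b a' b' : List α} (h : CycleStep R a b)
    (h1 : Sim a a') (h2 : Sim b b') : CycleStep R a' b' := by
  obtain ⟨l, r, w, hm, hl, hr⟩ := h
  exact ⟨l, r, w, hm, sim_trans0 hl h1, sim_trans0 hr h2⟩

-- kap computation
lemma toList_rev (o : Option α) : o.toList.reverse = o.toList := by cases o <;> simp

lemma kap_procSym (s : St α) (y : Sym) :
    kap (procSym s y) =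
      (letB y).toList ++ (if bnd s.srt y then [] else kap s) ++ (letA y).toList := by
  by_cases hb : bnd s.srt y <;>
    simp [procSym, kap, hb, toList_rev, List.append_assoc]

lemma done_procSym (s : St α) (y : Sym) :
    (procSym s y).done = if bnd s.srt y then s.done ++ [seg s] else s.done := rfl
lemma srt_procSym (s : St α) (y : Sym) : (procSym s y).srt = some (outs y) := rfl

lemma sim_kapclause {s₁ s₂ : St α}
    (hk : kap s₁ = kap s₂ ∨ (s₁.srt = some .u ∧ Sim (kap s₁) (kap s₂))) :
    Sim (seg s₁) (seg s₂) := by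
  rcases hk with hk | ⟨_, hk⟩
  · exact sim_trans0 (sim_seg_kap s₁) (hk ▸ sim_kap_seg s₂)
  · exact sim_trans0 (sim_seg_kap s₁) (sim_trans0 hk (sim_kap_seg s₂))

lemma bnd_u_true {σ : Option S5} (h : σ = some .u) (y : Sym) : bnd σ y = true := by
  subst h
  simp [bnd]
  intro h
  exact (ins_ne_u y h.symm).elim

lemma pres_REl {s₁ s₂ : St α} (h : REl s₁ s₂) (y : Sym) :
    REl (procSym s₁ y) (procSym s₂ y) := by
  obtain ⟨hσ, hd, hk⟩ := h
  have hbeq : bnd s₁.srt y = bnd s₂.srt y := by rw [hσ]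
  by_cases hb : bnd s₂.srt y
  · refine ⟨rfl, ?_, Or.inl ?_⟩
    · rw [done_procSym, done_procSym, hbeq, if_pos hb, if_pos hb]
      exact forall₂_app hd (List.forall₂_cons.2 ⟨sim_kapclause hk, List.Forall₂.nil⟩)
    · rw [kap_procSym, kap_procSym, hbeq, if_pos hb, if_pos hb]
  · have hkne : kap s₁ = kap s₂ := by
      rcases hk with hk | ⟨hu, _⟩
      · exact hk
      · rw [hσ] at hu
        rw [bnd_u_true hu y] at hb
        exact absurd rfl hb
    refine ⟨rfl, ?_, Or.inl ?_⟩
    · rw [done_procSym, done_procSym, hbeq, if_neg hb, if_neg hb]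
      exact hd
    · rw [kap_procSym, kap_procSym, hbeq, if_neg hb, if_neg hb, hkne]

lemma pres_RLen {s₁ s₂ : St α} (h : RLen s₁ s₂) (y : Sym) :
    RLen (procSym s₁ y) (procSym s₂ y) := by
  obtain ⟨hσ, hlen⟩ := h
  have hbeq : bnd s₁.srt y = bnd s₂.srt y := by rw [hσ]
  refine ⟨rfl, ?_⟩
  rw [done_procSym, done_procSym, hbeq]
  by_cases hb : bnd s₂.srt y <;> simp [hb] <;> omega

lemma pres_RM {s₁ s₂ : St α} (h : RM s₁ s₂) (y : Sym) :
    RALL (procSym s₁ y) (procSym s₂ y) := by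
  obtain ⟨τ, hσ₂, hτ, rfl⟩ := h
  by_cases him : ins y = S5.m
  · -- lhs no boundary, rhs boundary: states coincide
    left
    apply REl_of_eq
    have hb1 : bnd (some S5.m) y = false := by simp [bnd, him]
    have hb2 : bnd s₂.srt y = true := by
      rw [hσ₂]; simp [bnd, him]; exact hτ
    ext1 <;> simp [procSym, hb1, hb2, seg]
  · have him' : ¬ (S5.m = ins y) := fun h => him h.symm
    have hb1 : bnd (some S5.m) y = true := by simp [bnd]; exact him'
    right; right; right
    refine ⟨rfl, ?_⟩
    rw [done_procSym, done_procSym]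
    have : bnd ({ done := s₂.done ++ [seg s₂], cas := [], cbs := [], srt := some S5.m } : St α).srt y = true := hb1
    rw [this]
    simp only [if_true]
    by_cases hb2 : bnd s₂.srt y <;> simp [hb2, seg] <;> omega

lemma pres_RM0 {s₁ s₂ : St α} (h : RM0 s₁ s₂) (y : Sym) :
    RALL (procSym s₁ y) (procSym s₂ y) := by
  obtain ⟨rfl, rfl⟩ := h
  by_cases him : ins y = S5.m
  · left
    apply REl_of_eq
    have hb1 : bnd (some S5.m) y = false := by simp [bnd, him]
    ext1 <;> simp [procSym, hb1, bnd, him]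
  · have him' : ¬ (S5.m = ins y) := fun h => him h.symm
    have hb1 : bnd (some S5.m) y = true := by simp [bnd]; exact him'
    right; right; right
    refine ⟨rfl, ?_⟩
    simp [done_procSym, hb1, bnd, him']

lemma pres_RH1 {s₁ s₂ : St α} (h : RH1 R s₁ s₂) (y : Sym) :
    RH R (procSym s₁ y) (procSym s₂ y) := by
  obtain ⟨hσ, hd, hk⟩ := h
  have hbeq : bnd s₁.srt y = bnd s₂.srt y := by rw [hσ]
  by_cases hb : bnd s₂.srt y
  · right
    refine ⟨rfl, ?_, Or.inl ?_⟩
    · refine ⟨s₁.done, seg s₁, [], s₂.done, seg s₂, [], ?_, ?_, hd, List.Forall₂.nil, ?_⟩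
      · rw [done_procSym, hbeq, if_pos hb]
      · rw [done_procSym, if_pos hb]
      · exact cycleStep_simLR (cycleStep_of_HK hk) (sim_kap_seg s₁) (sim_kap_seg s₂)
    · rw [kap_procSym, kap_procSym, hbeq, if_pos hb, if_pos hb]
  · left
    refine ⟨rfl, ?_, ?_⟩
    · rw [done_procSym, done_procSym, hbeq, if_neg hb, if_neg hb]; exact hd
    · rw [kap_procSym, kap_procSym, hbeq, if_neg hb, if_neg hb]
      obtain ⟨l, r, pre, post, hm, hk1, hk2⟩ := hk
      exact ⟨l, r, (letB y).toList ++ pre, post ++ (letA y).toList,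
        hm, by simp [hk1, List.append_assoc], by simp [hk2, List.append_assoc]⟩

lemma pres_RH2 {s₁ s₂ : St α} (h : RH2 R s₁ s₂) (y : Sym) :
    RH2 R (procSym s₁ y) (procSym s₂ y) := by
  obtain ⟨hσ, ⟨d₁, c₁, e₁, d₂, c₂, e₂, hde1, hde2, hsd, hse, hc⟩, hk⟩ := h
  have hbeq : bnd s₁.srt y = bnd s₂.srt y := by rw [hσ]
  by_cases hb : bnd s₂.srt y
  · refine ⟨rfl, ?_, Or.inl ?_⟩
    · refine ⟨d₁, c₁, e₁ ++ [seg s₁], d₂, c₂, e₂ ++ [seg s₂], ?_, ?_, hsd, ?_, hc⟩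
      · rw [done_procSym, hbeq, if_pos hb, hde1]; simp
      · rw [done_procSym, if_pos hb, hde2]; simp
      · exact forall₂_app hse (List.forall₂_cons.2 ⟨sim_kapclause hk, List.Forall₂.nil⟩)
    · rw [kap_procSym, kap_procSym, hbeq, if_pos hb, if_pos hb]
  · have hkne : kap s₁ = kap s₂ := by
      rcases hk with hk | ⟨hu, _⟩
      · exact hk
      · rw [hσ] at hu; rw [bnd_u_true hu y] at hb; exact absurd rfl hb
    refine ⟨rfl, ?_, Or.inl ?_⟩
    · refine ⟨d₁, c₁, e₁, d₂, c₂, e₂, ?_, ?_, hsd, hse, hc⟩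
      · rw [done_procSym, hbeq, if_neg hb]; exact hde1
      · rw [done_procSym, if_neg hb]; exact hde2
    · rw [kap_procSym, kap_procSym, hbeq, if_neg hb, if_neg hb, hkne]

lemma pres_RALL {s₁ s₂ : St α} (h : RALL s₁ s₂) (y : Sym) :
    RALL (procSym s₁ y) (procSym s₂ y) := by
  rcases h with h | h | h | h
  · exact Or.inl (pres_REl h y)
  · exact pres_RM h y
  · exact pres_RM0 h y
  · exact Or.inr (Or.inr (Or.inr (pres_RLen h y)))

lemma pres_RH {s₁ s₂ : St α} (h : RH R s₁ s₂) (y : Sym) :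
    RH R (procSym s₁ y) (procSym s₂ y) := by
  rcases h with h | h
  · exact pres_RH1 h y
  · exact Or.inr (pres_RH2 h y)

lemma proc_RALL {s₁ s₂ : St α} (h : RALL s₁ s₂) (v : List Sym) :
    RALL (proc s₁ v) (proc s₂ v) := by
  induction v generalizing s₁ s₂ with
  | nil => exact h
  | cons y t ih => exact ih (pres_RALL h y)

lemma proc_RH {s₁ s₂ : St α} (h : RH R s₁ s₂) (v : List Sym) :
    RH R (proc s₁ v) (proc s₂ v) := by
  induction v generalizing s₁ s₂ with
  | nil => exact h
  | cons y t ih => exact ih (pres_RH h y)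

-- finalization
lemma fin_REl {s₁ s₂ : St α} (h : REl s₁ s₂) :
    List.Forall₂ (SC R) (fin s₁) (fin s₂) := by
  obtain ⟨hσ, hd, hk⟩ := h
  exact forall₂_app (List.Forall₂.imp (fun _ _ h => Or.inl h) hd)
    (List.forall₂_cons.2 ⟨Or.inl (sim_kapclause hk), List.Forall₂.nil⟩)

lemma fin_RALL {s₁ s₂ : St α} (h : RALL s₁ s₂) :
    List.Forall₂ (SC R) (fin s₁) (fin s₂) ∨ (fin s₂).length < (fin s₁).length := by
  rcases h with h | h | h | h
  · exact Or.inl (fin_REl h)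
  · obtain ⟨τ, hσ, hτ, rfl⟩ := h
    right; simp [fin]
  · obtain ⟨rfl, rfl⟩ := h
    left
    refine List.forall₂_cons.2 ⟨Or.inl ?_, List.Forall₂.nil⟩
    exact sim_refl0 _
  · obtain ⟨hσ, hlen⟩ := h
    right; simp [fin]; omega

lemma fin_RH {s₁ s₂ : St α} (h : RH R s₁ s₂) :
    List.Forall₂ (SC R) (fin s₁) (fin s₂) ∧
    ∃ d₁ c₁ e₁ d₂ c₂ e₂, fin s₁ = d₁ ++ c₁ :: e₁ ∧ fin s₂ = d₂ ++ c₂ :: e₂ ∧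
      d₁.length = d₂.length ∧ CycleStep R c₁ c₂ := by
  rcases h with ⟨hσ, hd, hk⟩ | ⟨hσ, ⟨d₁, c₁, e₁, d₂, c₂, e₂, hde1, hde2, hsd, hse, hc⟩, hk⟩
  · have hcs : CycleStep R (seg s₁) (seg s₂) :=
      cycleStep_simLR (cycleStep_of_HK hk) (sim_kap_seg s₁) (sim_kap_seg s₂)
    constructor
    · exact forall₂_app (List.Forall₂.imp (fun _ _ h => Or.inl h) hd)
        (List.forall₂_cons.2 ⟨Or.inr hcs, List.Forall₂.nil⟩)
    · exact ⟨s₁.done, seg s₁, [], s₂.done, seg s₂, [], rfl, rfl, hd.length_eq, hcs⟩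
  · have hss : Sim (seg s₁) (seg s₂) := sim_kapclause hk
    constructor
    · rw [fin, fin, hde1, hde2]
      simp only [List.append_assoc, List.cons_append, List.nil_append]
      refine forall₂_app (List.Forall₂.imp (fun _ _ h => Or.inl h) hsd) ?_
      refine List.forall₂_cons.2 ⟨Or.inr hc, ?_⟩
      exact forall₂_app (List.Forall₂.imp (fun _ _ h => Or.inl h) hse)
        (List.forall₂_cons.2 ⟨Or.inl hss, List.Forall₂.nil⟩)
    · refine ⟨d₁, c₁, e₁ ++ [seg s₁], d₂, c₂, e₂ ++ [seg s₂], ?_, ?_, hsd.length_eq, hc⟩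
      · rw [fin, hde1]; simp
      · rw [fin, hde2]; simp

-- establishment helpers
def dn (s : St α) (y : Sym) : List (List α) :=
  if bnd s.srt y then s.done ++ [seg s] else s.done

lemma bnd_congr_ins {σ : Option S5} {y z : Sym} (h : ins y = ins z) : bnd σ y = bnd σ z := by
  cases σ <;> simp [bnd, h]

lemma procSym_sm {s : St α} (hInv : Inv s) {y : Sym} (hy : ins y = S5.s ∨ ins y = S5.m) :
    procSym s y = ⟨dn s y, (letA y).toList, (letB y).toList, some (outs y)⟩ := by
  obtain ⟨h0, h1, h2⟩ := hInv
  by_cases hb : bnd s.srt y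
  · ext1 <;> simp [procSym, dn, hb]
  · have hcc : s.cas = [] ∧ s.cbs = [] := by
      rcases noBnd_cases (by simpa using hb) with hσ | hσ
      · exact ⟨(h0 hσ).2.1, (h0 hσ).2.2⟩
      · rcases hy with hy | hy
        · exact h1 (Or.inl (by rw [hσ, hy]))
        · exact h1 (Or.inr (by rw [hσ, hy]))
    ext1 <;> simp [procSym, dn, hb, hcc.1, hcc.2]

lemma procSym_r {s : St α} (hInv : Inv s) {y : Sym} (hy : ins y = S5.r) :
    procSym s y = ⟨dn s y, (if bnd s.srt y then [] else s.cas) ++ (letA y).toList,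
      (letB y).toList, some (outs y)⟩ := by
  obtain ⟨h0, h1, h2⟩ := hInv
  by_cases hb : bnd s.srt y
  · ext1 <;> simp [procSym, dn, hb]
  · have hcb : s.cbs = [] := by
      rcases noBnd_cases (by simpa using hb) with hσ | hσ
      · exact (h0 hσ).2.2
      · exact h2 (by rw [hσ, hy])
    ext1 <;> simp [procSym, dn, hb, hcb]

lemma proc_M_const : ∀ (n : ℕ) (s : St α), s.srt = some S5.m →
    proc s (List.replicate n symM) = s := by
  intro n
  induction n with
  | zero => intro s _; rfl
  | succ k ih =>
    intro s hσ
    have : procSym s symM = s := by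
      ext1 <;> simp [procSym, hσ, bnd, ins, letA, letB, outs]
    rw [List.replicate_succ, proc_cons, this]
    exact ih s hσ

lemma proc_ca : ∀ (p : List α) (s : St α), s.srt = some S5.t →
    proc s (p.map ShiftSym.ca) = ⟨s.done, s.cas ++ p, s.cbs, some S5.t⟩ := by
  intro p
  induction p with
  | nil => intro s hσ; ext1 <;> simp [hσ]
  | cons a p ih =>
    intro s hσ
    have h1 : procSym s (ca a) = ⟨s.done, s.cas ++ [a], s.cbs, some S5.t⟩ := by
      ext1 <;> simp [procSym, hσ, bnd, ins, letA, letB, outs]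
    rw [List.map_cons, proc_cons, h1, ih _ rfl]
    ext1 <;> simp

-- establishment lemmas: s₀ is an arbitrary state satisfying Inv
variable {s₀ : St α}

lemma estA (hInv : Inv s₀) (N : ℕ) :
    REl (proc s₀ [symB]) (proc s₀ (symW :: List.replicate N symM ++ [symV])) := by
  apply REl_of_eq
  have h1 : proc s₀ [symB] = ⟨dn s₀ symB, [], [], some S5.t⟩ := by
    simp only [proc, List.foldl_cons, List.foldl_nil]
    exact procSym_sm hInv (Or.inl rfl)
  have h2 : procSym s₀ symW = ⟨dn s₀ symW, [], [], some S5.m⟩ := procSym_sm hInv (Or.inl rfl)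
  have hdn : dn s₀ (symW : Sym) = dn s₀ (symB : Sym) := by
    simp [dn, bnd_congr_ins (show ins (symW : Sym) = ins (symB : Sym) from rfl)]
  have hROT : proc s₀ (symW :: List.replicate N symM ++ [symV]) =
      ⟨dn s₀ symW, [], [], some S5.t⟩ := by
    have e1 : proc s₀ (symW :: List.replicate N symM ++ [symV]) =
        proc (proc (procSym s₀ symW) (List.replicate N symM)) [symV] := by
      rw [List.cons_append, proc_cons, proc_append]
    rw [e1, h2, proc_M_const N _ rfl]
    ext1 <;> simp [proc, procSym, bnd, ins, letA, letB, outs]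
  rw [h1, hROT, hdn]

lemma estF :
    REl (proc s₀ (α := α) [symW, symV]) (proc s₀ [symR, symL]) := by
  apply REl_of_eq
  ext1 <;> simp [proc, procSym, bnd, ins, letA, letB, outs] <;> rfl

lemma estJ :
    REl (proc s₀ (α := α) [symR, symD]) (proc s₀ [symB]) := by
  apply REl_of_eq
  ext1 <;> simp [proc, procSym, bnd, ins, letA, letB, outs] <;> rfl

lemma estB (hInv : Inv s₀) : RALL (proc s₀ [symM]) (proc s₀ []) := by
  obtain ⟨h0, h1, h2⟩ := hInv
  rcases hσ : s₀.srt with _ | τ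
  · right; right; left
    have hs : s₀ = ⟨[], [], [], none⟩ := by
      ext1 <;> simp [(h0 hσ).1, (h0 hσ).2.1, (h0 hσ).2.2, hσ]
    constructor
    · rw [hs]; ext1 <;> simp [proc, procSym, bnd, letA, letB, outs]
    · simp [proc]; exact hs
  · by_cases hτ : τ = S5.m
    · subst hτ
      left
      apply REl_of_eq
      have hb : bnd s₀.srt (symM : Sym) = false := by rw [hσ]; simp [bnd, ins]
      show procSym s₀ symM = s₀
      ext1 <;> simp [procSym, hσ, bnd, ins, letA, letB, outs]
    · right; left
      refine ⟨τ, hσ, hτ, ?_⟩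
      show procSym s₀ symM = _
      ext1 <;> simp [procSym, hσ, bnd, ins, letA, letB, outs, hτ]

lemma estC (hInv : Inv s₀) (a : α) :
    REl (proc s₀ [symM, symV, ca a]) (proc s₀ [symV, cb a]) := by
  have h1 : procSym s₀ symM = ⟨dn s₀ symM, [], [], some S5.m⟩ := procSym_sm hInv (Or.inr rfl)
  have h2 : procSym s₀ symV = ⟨dn s₀ symV, [], [], some S5.t⟩ := procSym_sm hInv (Or.inr rfl)
  have hdn : dn s₀ (symV : Sym) = dn s₀ (symM : Sym) := by
    simp [dn, bnd_congr_ins (show ins (symV : Sym) = ins (symM : Sym) from rfl)]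
  have hL : proc s₀ [symM, symV, ca a] = ⟨dn s₀ symM, [a], [], some S5.t⟩ := by
    show proc (procSym s₀ symM) [symV, ca a] = _
    rw [h1]
    have hbV : bnd (some S5.m) (symV : Sym) = false := by simp [bnd, ins]
    have hbA : bnd (some S5.t) (ca a : Sym) = false := by simp [bnd, ins]
    ext1 <;> simp [proc, procSym, hbV, hbA, letA, letB, outs]
  have hR : proc s₀ [symV, cb a] = ⟨dn s₀ symM, [], [a], some S5.t⟩ := by
    show proc (procSym s₀ symV) [cb a] = _
    rw [h2]
    have hbB : bnd (some S5.t) (cb a : Sym) = false := by simp [bnd, ins]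
    ext1 <;> simp [proc, procSym, hbB, letA, letB, outs, hdn]
  rw [hL, hR]
  exact ⟨rfl, forall₂_sim_refl _, Or.inl (by simp [kap])⟩

lemma estD (a b : α) :
    REl (proc s₀ [cb b, ca a]) (proc s₀ [ca a, cb b]) := by
  apply REl_of_eq
  ext1 <;> simp [proc, procSym, bnd, ins, letA, letB, outs] <;> rfl

lemma estE (b : α) :
    REl (proc s₀ [cb b, symE]) (proc s₀ [ca b, symE]) := by
  have hbnd : bnd s₀.srt (ca b : Sym) = bnd s₀.srt (cb b : Sym) := bnd_congr_ins rfl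
  have hbE1 : bnd (procSym s₀ (cb b)).srt (symE : Sym) = false := by
    simp [srt_procSym, outs, bnd, ins]
  have hbE2 : bnd (procSym s₀ (ca b)).srt (symE : Sym) = false := by
    simp [srt_procSym, outs, bnd, ins]
  refine ⟨by simp [proc, procSym, outs], ?_, Or.inr ⟨by simp [proc, procSym, outs], ?_⟩⟩
  · have hdone : (proc s₀ [cb b, symE]).done = (proc s₀ [ca b, symE]).done := by
      simp [proc, procSym, bnd, ins, letA, letB, outs] <;> rfl
    show List.Forall₂ Sim (proc s₀ [cb b, symE]).done (proc s₀ [ca b, symE]).done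
    rw [hdone]
    exact forall₂_sim_refl _
  · have k1 : kap (proc s₀ [cb b, symE]) =
        [b] ++ (if bnd s₀.srt (cb b) then [] else kap s₀) := by
      show kap (procSym (procSym s₀ (cb b)) symE) = _
      rw [kap_procSym, hbE1, kap_procSym]
      simp [letA, letB]
    have k2 : kap (proc s₀ [ca b, symE]) =
        (if bnd s₀.srt (cb b) then [] else kap s₀) ++ [b] := by
      show kap (procSym (procSym s₀ (ca b)) symE) = _
      rw [kap_procSym, hbE2, kap_procSym, hbnd]
      simp [letA, letB]
    rw [k1, k2]
    exact sim_comm0 [b] _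

lemma estG (a : α) :
    REl (proc s₀ [symL, ca a]) (proc s₀ [cc a, symL]) := by
  apply REl_of_eq
  ext1 <;> simp [proc, procSym, bnd, ins, letA, letB, outs] <;> rfl

lemma estI (c : α) :
    REl (proc s₀ [cc c, symD]) (proc s₀ [symD, ca c]) := by
  apply REl_of_eq
  ext1 <;> simp [proc, procSym, bnd, ins, letA, letB, outs] <;> rfl

lemma estH (hInv : Inv s₀) {l' r' : List α} (hm : (l', r') ∈ R) :
    RH R (proc s₀ (symL :: l'.map ShiftSym.ca)) (proc s₀ (symD :: r'.map ShiftSym.ca)) := by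
  have h1 : procSym s₀ symL = ⟨dn s₀ symL, (if bnd s₀.srt (symL : Sym) then [] else s₀.cas), [],
      some S5.t⟩ := by
    have := procSym_r hInv (y := (symL : Sym)) rfl
    simpa [letA, letB, outs] using this
  have h2 : procSym s₀ symD = ⟨dn s₀ symL, (if bnd s₀.srt (symL : Sym) then [] else s₀.cas), [],
      some S5.t⟩ := by
    have := procSym_r hInv (y := (symD : Sym)) rfl
    have hdn : dn s₀ (symD : Sym) = dn s₀ (symL : Sym) := by
      simp [dn, bnd_congr_ins (show ins (symD : Sym) = ins (symL : Sym) from rfl)]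
    have hbnd : bnd s₀.srt (symD : Sym) = bnd s₀.srt (symL : Sym) := bnd_congr_ins rfl
    rw [this, hdn, hbnd]
    ext1 <;> simp [letA, letB, outs]
  set ka := (if bnd s₀.srt (symL : Sym) then [] else s₀.cas) with hka
  have hL : proc s₀ (symL :: l'.map ShiftSym.ca) = ⟨dn s₀ symL, ka ++ l', [], some S5.t⟩ := by
    show proc (procSym s₀ symL) (l'.map ShiftSym.ca) = _
    rw [h1, proc_ca _ _ rfl]
  have hR : proc s₀ (symD :: r'.map ShiftSym.ca) = ⟨dn s₀ symL, ka ++ r', [], some S5.t⟩ := by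
    show proc (procSym s₀ symD) (r'.map ShiftSym.ca) = _
    rw [h2, proc_ca _ _ rfl]
  rw [hL, hR]
  left
  refine ⟨rfl, forall₂_sim_refl _, l', r', ka, [], hm, by simp [kap], by simp [kap]⟩

end Machine

section Assembly
open ShiftSym
variable {α : Type*} {R : Set (List α × List α)}
local notation "Sym" => ShiftSym α

theorem stepPhi {x y : List Sym} (h : Step (shiftSRS R) x y) :
    List.Forall₂ (SC R) (Phi (α := α) x) (Phi y) ∨ (Phi y).length < (Phi x).length := by
  obtain ⟨u, v, l, r, hr, rfl, rfl⟩ := h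
  have hInv : Inv (proc (initSt : St α) u) := inv_proc u _ inv_init
  set s₀ := proc (initSt : St α) u with hs₀
  have key : RALL (proc s₀ l) (proc s₀ r) ∨ RH R (proc s₀ l) (proc s₀ r) := by
    rcases hr with h | h | ⟨a, h⟩ | ⟨a, b, h⟩ | ⟨b, h⟩ | h | ⟨a, h⟩ | ⟨l', r', hm, h⟩ | ⟨c, h⟩ | h <;>
      (rw [Prod.mk.injEq] at h; obtain ⟨rfl, rfl⟩ := h)
    · exact Or.inl (Or.inl (estA hInv _))
    · exact Or.inl (estB hInv)
    · exact Or.inl (Or.inl (estC hInv a))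
    · exact Or.inl (Or.inl (estD a b))
    · exact Or.inl (Or.inl (estE b))
    · exact Or.inl (Or.inl estF)
    · exact Or.inl (Or.inl (estG a))
    · exact Or.inr (estH hInv hm)
    · exact Or.inl (Or.inl (estI c))
    · exact Or.inl (Or.inl estJ)
  have ephi1 : Phi (α := α) (u ++ l ++ v) = fin (proc (proc s₀ l) v) := by
    rw [Phi, proc_append, proc_append]
  have ephi2 : Phi (α := α) (u ++ r ++ v) = fin (proc (proc s₀ r) v) := by
    rw [Phi, proc_append, proc_append]
  rw [ephi1, ephi2]
  rcases key with hk | hk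
  · exact fin_RALL (proc_RALL hk v)
  · exact Or.inl (fin_RH (proc_RH hk v)).1

theorem stepPhiH {u v : List Sym} {l' r' : List α} (hm : (l', r') ∈ R) :
    ∃ d₁ c₁ e₁ d₂ c₂ e₂,
      Phi (α := α) (u ++ (symL :: l'.map ShiftSym.ca) ++ v) = d₁ ++ c₁ :: e₁ ∧
      Phi (α := α) (u ++ (symD :: r'.map ShiftSym.ca) ++ v) = d₂ ++ c₂ :: e₂ ∧
      d₁.length = d₂.length ∧ CycleStep R c₁ c₂ := by
  have hInv : Inv (proc (initSt : St α) u) := inv_proc u _ inv_init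
  set s₀ := proc (initSt : St α) u with hs₀
  have key := proc_RH (estH (s₀ := s₀) hInv hm) v
  have ephi1 : Phi (α := α) (u ++ (symL :: l'.map ShiftSym.ca) ++ v) =
      fin (proc (proc s₀ (symL :: l'.map ShiftSym.ca)) v) := by
    rw [Phi, proc_append, proc_append]
  have ephi2 : Phi (α := α) (u ++ (symD :: r'.map ShiftSym.ca) ++ v) =
      fin (proc (proc s₀ (symD :: r'.map ShiftSym.ca)) v) := by
    rw [Phi, proc_append, proc_append]
  rw [ephi1, ephi2]
  exact (fin_RH key).2

def IsH (R : Set (List α × List α)) (x y : List Sym) : Prop :=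
  ∃ u v l' r', (l', r') ∈ R ∧ x = u ++ (symL :: l'.map ShiftSym.ca) ++ v ∧
    y = u ++ (symD :: r'.map ShiftSym.ca) ++ v

lemma step_class {x y : List Sym} (h : Step (shiftSRS R) x y) :
    IsH R x y ∨ lt8 (mu y) (mu x) := by
  obtain ⟨u, v, l, r, hr, rfl, rfl⟩ := h
  have hr' := hr
  rcases hr with h | h | ⟨a, h⟩ | ⟨a, b, h⟩ | ⟨b, h⟩ | h | ⟨a, h⟩ | ⟨l', r', hm, h⟩ | ⟨c, h⟩ | h <;>
    (rw [Prod.mk.injEq] at h; obtain ⟨rfl, rfl⟩ := h)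
  · refine Or.inr (mu_dec_nonH u v rfl rfl ⟨hr', ?_⟩)
    rintro ⟨l', r', -, heq⟩
    rw [Prod.mk.injEq] at heq
    simp at heq
  · refine Or.inr (mu_dec_nonH u v rfl rfl ⟨hr', ?_⟩)
    rintro ⟨l', r', -, heq⟩
    rw [Prod.mk.injEq] at heq
    simp at heq
  · refine Or.inr (mu_dec_nonH u v rfl rfl ⟨hr', ?_⟩)
    rintro ⟨l', r', -, heq⟩
    rw [Prod.mk.injEq] at heq
    simp at heq
  · refine Or.inr (mu_dec_nonH u v rfl rfl ⟨hr', ?_⟩)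
    rintro ⟨l', r', -, heq⟩
    rw [Prod.mk.injEq] at heq
    simp at heq
  · refine Or.inr (mu_dec_nonH u v rfl rfl ⟨hr', ?_⟩)
    rintro ⟨l', r', -, heq⟩
    rw [Prod.mk.injEq] at heq
    simp at heq
  · refine Or.inr (mu_dec_nonH u v rfl rfl ⟨hr', ?_⟩)
    rintro ⟨l', r', -, heq⟩
    rw [Prod.mk.injEq] at heq
    simp at heq
  · refine Or.inr (mu_dec_nonH u v rfl rfl ⟨hr', ?_⟩)
    rintro ⟨l', r', -, heq⟩
    rw [Prod.mk.injEq] at heq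
    simp at heq
  · exact Or.inl ⟨u, v, l', r', hm, rfl, rfl⟩
  · refine Or.inr (mu_dec_nonH u v rfl rfl ⟨hr', ?_⟩)
    rintro ⟨l', r', -, heq⟩
    rw [Prod.mk.injEq] at heq
    simp at heq
  · refine Or.inr (mu_dec_nonH u v rfl rfl ⟨hr', ?_⟩)
    rintro ⟨l', r', -, heq⟩
    rw [Prod.mk.injEq] at heq
    simp at heq

-- getD of a split list
lemma getD_split {γ : Type*} (d : List γ) (c : γ) (e : List γ) (w : γ) :
    (d ++ c :: e).getD d.length w = c := by
  induction d with
  | nil => rfl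
  | cons a d ih => simpa using ih

lemma forall₂_getD {γ : Type*} {P : γ → γ → Prop} {a b : List γ} (h : List.Forall₂ P a b)
    {j : ℕ} (hj : j < a.length) (w : γ) : P (a.getD j w) (b.getD j w) := by
  rcases List.forall₂_iff_get.1 h with ⟨hlen, hget⟩
  have hj2 : j < b.length := hlen ▸ hj
  rw [List.getD_eq_getElem _ _ hj, List.getD_eq_getElem _ _ hj2]
  exact hget j hj hj2

end Assembly

section Final
open ShiftSym
variable {α : Type*} {R : Set (List α × List α)}
local notation "Sym" => ShiftSym α

lemma complete_dir (hc : Terminating (CycleStep R)) : Terminating (Step (shiftSRS R)) := by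
  classical
  rintro ⟨f, hf⟩
  -- there are infinitely many H-steps
  have hHinf : {n : ℕ | IsH R (f n) (f (n + 1))}.Infinite := by
    by_contra hfin
    rw [Set.not_infinite] at hfin
    obtain ⟨N, hN⟩ : ∃ N, ∀ n, IsH R (f n) (f (n + 1)) → n < N := by
      rcases Set.Finite.bddAbove hfin with ⟨N, hN⟩
      exact ⟨N + 1, fun n hn => Nat.lt_succ_of_le (hN hn)⟩
    refine wf_no_descent lt8_wf ⟨fun k => mu (f (N + k)), fun k => ?_⟩
    rcases step_class (hf (N + k)) with h | h
    · exact absurd (hN _ h) (by omega)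
    · have he : N + k + 1 = N + (k + 1) := by omega
      rw [he] at h
      exact h
  -- Phi-lengths are antitone, hence eventually constant
  set L : ℕ → ℕ := fun n => (Phi (α := α) (f n)).length with hLdef
  have hstepL : ∀ m, L (m + 1) ≤ L m := by
    intro m
    rcases stepPhi (hf m) with h | h
    · exact le_of_eq h.length_eq.symm
    · exact le_of_lt h
  have hmono : ∀ n m, n ≤ m → L m ≤ L n := by
    intro n m hle
    induction hle with
    | refl => exact le_rfl
    | @step m hm ih => exact le_trans (hstepL m) ih
  obtain ⟨N₀, hN₀⟩ : ∃ N₀, ∀ n, N₀ ≤ n → L n = L N₀ := by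
    obtain ⟨N₀, hval⟩ := Nat.sInf_mem (Set.range_nonempty L)
    refine ⟨N₀, fun n hn => ?_⟩
    have h1 : L n ≤ L N₀ := hmono _ _ hn
    have h2 : sInf (Set.range L) ≤ L n := Nat.sInf_le ⟨n, rfl⟩
    omega
  set K := L N₀ with hK
  set g : ℕ → ℕ → List α := fun j n => (Phi (α := α) (f n)).getD j [] with hg
  have hSC : ∀ n, N₀ ≤ n → ∀ j, j < K →
      Sim (g j n) (g j (n + 1)) ∨ CycleStep R (g j n) (g j (n + 1)) := by
    intro n hn j hj
    rcases stepPhi (hf n) with h | h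
    · have hlen : j < (Phi (α := α) (f n)).length := by
        have := hN₀ n hn
        simp only [hLdef] at this
        omega
      exact forall₂_getD h hlen []
    · exfalso
      have e1 := hN₀ n hn
      have e2 := hN₀ (n + 1) (by omega)
      simp only [hLdef] at e1 e2
      omega
  set S : ℕ → Set ℕ := fun j => {n | N₀ ≤ n ∧ CycleStep R (g j n) (g j (n + 1))} with hS
  have hsub : {n : ℕ | N₀ ≤ n ∧ IsH R (f n) (f (n + 1))} ⊆ ⋃ j ∈ Finset.range K, S j := by
    rintro n ⟨hn, u, v, l', r', hm, hx, hy⟩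
    obtain ⟨d₁, c₁, e₁, d₂, c₂, e₂, h1, h2, hlen, hcyc⟩ :=
      stepPhiH (α := α) (R := R) (u := u) (v := v) hm
    have hPx : Phi (α := α) (f n) = d₁ ++ c₁ :: e₁ := by rw [hx]; exact h1
    have hPy : Phi (α := α) (f (n + 1)) = d₂ ++ c₂ :: e₂ := by rw [hy]; exact h2
    have hjlt : d₁.length < K := by
      have := hN₀ n hn
      simp only [hLdef] at this
      rw [hPx] at this
      simp at this
      omega
    have hg1 : g d₁.length n = c₁ := by
      simp only [hg, hPx]
      exact getD_split d₁ c₁ e₁ []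
    have hg2 : g d₁.length (n + 1) = c₂ := by
      simp only [hg, hPy, hlen]
      exact getD_split d₂ c₂ e₂ []
    refine Set.mem_biUnion (Finset.mem_range.2 hjlt) ?_
    exact ⟨hn, by rw [hg1, hg2]; exact hcyc⟩
  obtain ⟨j, hjK, hSinf⟩ : ∃ j, j < K ∧ (S j).Infinite := by
    by_contra hall
    push_neg at hall
    have hfinU : (⋃ j ∈ Finset.range K, S j).Finite := by
      refine Set.Finite.biUnion (Finset.range K).finite_toSet ?_
      intro j hj
      exact hall j (Finset.mem_range.1 hj)
    have hinf2 : {n : ℕ | N₀ ≤ n ∧ IsH R (f n) (f (n + 1))}.Infinite := by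
      have hd := hHinf.diff (Set.finite_Iio N₀)
      refine hd.mono ?_
      rintro n ⟨hn1, hn2⟩
      simp only [Set.mem_Iio, not_lt] at hn2
      exact ⟨hn2, hn1⟩
    exact hinf2 (hfinU.subset hsub)
  set T : ℕ → Set ℕ := fun x => {n | n ∈ S j ∧ x < n} with hT
  have hTne : ∀ x, (T x).Nonempty := fun x => by
    obtain ⟨b, hb, hlt⟩ := hSinf.exists_gt x
    exact ⟨b, hb, hlt⟩
  let F : ℕ → ℕ := fun k => Nat.rec (sInf (T 0)) (fun _ prev => sInf (T prev)) k
  have hFmem : ∀ k, F k ∈ S j := by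
    intro k
    cases k with
    | zero => exact (Nat.sInf_mem (hTne 0)).1
    | succ k => exact (Nat.sInf_mem (hTne (F k))).1
  have hFlt : ∀ k, F k < F (k + 1) := fun k => (Nat.sInf_mem (hTne (F k))).2
  have hgap : ∀ k i, F k < i → i < F (k + 1) → i ∉ S j := by
    intro k i h1 h2 hmem
    exact Nat.notMem_of_lt_sInf h2 ⟨hmem, h1⟩
  have hchain : ∀ a b, N₀ ≤ a → a ≤ b → (∀ i, a ≤ i → i < b → i ∉ S j) →
      Sim (g j a) (g j b) := by
    intro a b ha hab
    induction hab with
    | refl => intro _; exact sim_refl0 _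
    | @step m hm ih =>
      intro hno
      have h1 : Sim (g j a) (g j m) := ih (fun i hi1 hi2 => hno i hi1 (by omega))
      have h2 : Sim (g j m) (g j (m + 1)) := by
        rcases hSC m (le_trans ha hm) j hjK with h | h
        · exact h
        · exact absurd ⟨le_trans ha hm, h⟩ (hno m hm (by omega))
      exact sim_trans0 h1 h2
  refine hc ⟨fun k => g j (F k), fun k => ?_⟩
  have hcyc : CycleStep R (g j (F k)) (g j (F k + 1)) := (hFmem k).2
  have hsim : Sim (g j (F k + 1)) (g j (F (k + 1))) := by
    apply hchain
    · have := (hFmem k).1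
      omega
    · exact hFlt k
    · intro i h1 h2
      exact hgap k i (by omega) h2
  obtain ⟨l0, r0, w0, hm0, hs1, hs2⟩ := hcyc
  exact ⟨l0, r0, w0, hm0, hs1, sim_trans0 hs2 hsim⟩

end Final

/-- soundness and completeness of the transformation `shift`. -/
theorem shift_sound_and_complete {α : Type*} [Finite α] (R : Set (List α × List α))
    (hfin : R.Finite) (hne : ∀ p ∈ R, p.1 ≠ []) :
    Terminating (Step (shiftSRS R)) ↔ Terminating (CycleStep R) := by
  constructor
  · intro hs
    exact sound_dir hfin hs
  · intro hc
    exact complete_dir hc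

end CycleRewriting
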